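/- arXiv:1310.2872 — 3 statements merged into one kernel-verified Lean document; each statement's English description precedes it below -/
import Mathlib

section
/- Let G be a finite simple unmixed graph and let x be a vertex of G that is not isolated. Then the independence number of G \ {x} equals the independence number of G, i.e., α(G \ {x}) = α(G). -/
variable {V : Type*} [DecidableEq V]

/-- `S` is an independent set of the induced subgraph of `G` on the vertex set `A`. -/
def IsIndepIn (G : SimpleGraph V) (A S : Finset V) : Prop :=
  S ⊆ A ∧ ∀ u ∈ S, ∀ v ∈ S, ¬G.Adj u v

/-- `S` is a maximal independent set of the induced subgraph of `G` on the vertex set `A`. -/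
def IsMaxIndepIn (G : SimpleGraph V) (A S : Finset V) : Prop :=
  IsIndepIn G A S ∧ ∀ T, IsIndepIn G A T → S ⊆ T → S = T

/-- The induced subgraph of `G` on `A` is unmixed: all maximal independent sets
have the same cardinality. -/
def UnmixedOn (G : SimpleGraph V) (A : Finset V) : Prop :=
  ∀ S T, IsMaxIndepIn G A S → IsMaxIndepIn G A T → S.card = T.card

open scoped Classical in
/-- The vertex set `A \ N_G[x]`. -/
noncomputable def delClosedNbhd (G : SimpleGraph V) (A : Finset V) (x : V) : Finset V :=
  A.filter fun y => y ≠ x ∧ ¬G.Adj x y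

/-- The induced subgraph of `G` on `A` is vertex decomposable. -/
inductive VertexDecomposableOn (G : SimpleGraph V) : Finset V → Prop
  | edgeless (A : Finset V) (h : ∀ u ∈ A, ∀ v ∈ A, ¬G.Adj u v) : VertexDecomposableOn G A
  | shed (A : Finset V) (x : V) (hx : x ∈ A)
      (hlink : VertexDecomposableOn G (delClosedNbhd G A x))
      (hdel : VertexDecomposableOn G (A.erase x))
      (hexch : ∀ S, IsIndepIn G (delClosedNbhd G A x) S →
        ∃ y ∈ A, G.Adj x y ∧ IsIndepIn G (A.erase x) (insert y S)) :
      VertexDecomposableOn G A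

/-- `x` is a shedding vertex of the induced subgraph of `G` on `A`. -/
def IsSheddingVertexOn (G : SimpleGraph V) (A : Finset V) (x : V) : Prop :=
  x ∈ A ∧
  VertexDecomposableOn G (delClosedNbhd G A x) ∧
  VertexDecomposableOn G (A.erase x) ∧
  ∀ S, IsIndepIn G (delClosedNbhd G A x) S →
    ∃ y ∈ A, G.Adj x y ∧ IsIndepIn G (A.erase x) (insert y S)

/-- The independence complex of the induced subgraph of `G` on `A` is shellable:
there is an ordering `F 0, F 1, …` of its facets (the maximal independent sets) such
that for every `i`, every face of the subcomplex `(⋃ j < i, ⟨F j⟩) ∩ ⟨F i⟩` is contained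
in a face of that subcomplex of cardinality `(F i).card - 1` (i.e. the subcomplex is
pure of dimension `dim (F i) - 1`). -/
def ShellableOn (G : SimpleGraph V) (A : Finset V) : Prop :=
  ∃ (t : ℕ) (F : Fin t → Finset V),
    Function.Injective F ∧
    (∀ S, IsMaxIndepIn G A S ↔ ∃ i, F i = S) ∧
    ∀ i : Fin t, ∀ S : Finset V, S ⊆ F i → (∃ j, j < i ∧ S ⊆ F j) →
      ∃ S' : Finset V, S ⊆ S' ∧ S' ⊆ F i ∧ (∃ j, j < i ∧ S' ⊆ F j) ∧
        S'.card = (F i).card - 1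

/-- A graph is chordal if every cycle of length at least four has a chord, i.e. an
edge of the graph joining two vertices of the cycle that is not an edge of the cycle. -/
def IsChordal (G : SimpleGraph V) : Prop :=
  ∀ (x : V) (w : G.Walk x x), w.IsCycle → 4 ≤ w.length →
    ∃ u v, u ∈ w.support ∧ v ∈ w.support ∧ G.Adj u v ∧ s(u, v) ∉ w.edges

/-- The induced subgraph of `G` on `A` is a cycle graph on `m` vertices. -/
def IsCycleGraphOn (G : SimpleGraph V) (A : Finset V) (m : ℕ) : Prop :=
  (∀ u v, G.Adj u v → u ∈ A ∧ v ∈ A) ∧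
  Nonempty (G.induce (A : Set V) ≃g SimpleGraph.cycleGraph m)

/-- The independence number of the induced subgraph of `G` on `A`. -/
noncomputable def indepNumOn (G : SimpleGraph V) (A : Finset V) : ℕ :=
  sSup {k | ∃ S, IsIndepIn G A S ∧ S.card = k}

open Classical in
lemma exists_max_ext (G : SimpleGraph V) (A S : Finset V) (hS : IsIndepIn G A S) :
    ∃ T, IsMaxIndepIn G A T ∧ S ⊆ T := by
  have hne : (A.powerset.filter (fun T => IsIndepIn G A T ∧ S ⊆ T)).Nonempty :=
    ⟨S, by simp [Finset.mem_filter, Finset.mem_powerset, hS, hS.1]⟩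
  obtain ⟨T, hT, hmax⟩ := Finset.exists_max_image _ Finset.card hne
  simp only [Finset.mem_filter, Finset.mem_powerset] at hT
  refine ⟨T, ⟨hT.2.1, ?_⟩, hT.2.2⟩
  intro T' hT' hsub
  apply Finset.eq_of_subset_of_card_le hsub
  apply hmax
  simp only [Finset.mem_filter, Finset.mem_powerset]
  exact ⟨hT'.1, hT', hT.2.2.trans hsub⟩

lemma bddAbove_indep (G : SimpleGraph V) (A : Finset V) :
    BddAbove {k | ∃ S, IsIndepIn G A S ∧ S.card = k} := by
  refine ⟨A.card, ?_⟩
  rintro k ⟨S, hS, rfl⟩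
  exact Finset.card_le_card hS.1

lemma indepNumOn_eq_of_max (G : SimpleGraph V) (A T : Finset V)
    (hun : UnmixedOn G A) (hT : IsMaxIndepIn G A T) :
    indepNumOn G A = T.card := by
  apply le_antisymm
  · apply csSup_le'
    rintro k ⟨S, hS, rfl⟩
    obtain ⟨T', hT', hsub⟩ := exists_max_ext G A S hS
    calc S.card ≤ T'.card := Finset.card_le_card hsub
    _ = T.card := hun T' T hT' hT
  · exact le_csSup (bddAbove_indep G A) ⟨T, hT.1, rfl⟩

/-- If `G` is unmixed and `x` is a non-isolated vertex of `G`, then the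
independence number of `G \ {x}` equals the independence number of `G`. -/
theorem stmt_9 {V : Type*} [DecidableEq V] (G : SimpleGraph V) (A : Finset V)
    (hun : UnmixedOn G A) (x : V) (hx : x ∈ A)
    -- `x` is not isolated
    (hniso : ∃ y ∈ A, G.Adj x y) :
    indepNumOn G (A.erase x) = indepNumOn G A := by
  obtain ⟨y, hy, hadj⟩ := hniso
  have hyindep : IsIndepIn G A {y} := by
    refine ⟨Finset.singleton_subset_iff.mpr hy, ?_⟩
    intro u hu v hv
    simp only [Finset.mem_singleton] at hu hv
    subst hu; subst hv; exact fun h => G.irrefl h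
  obtain ⟨T, hT, hsub⟩ := exists_max_ext G A {y} hyindep
  have hyT : y ∈ T := hsub (Finset.mem_singleton_self y)
  have hxT : x ∉ T := fun hxT => hT.1.2 x hxT y hyT hadj
  have hTsub : T ⊆ A.erase x := fun t ht =>
    Finset.mem_erase.mpr ⟨fun h => hxT (h ▸ ht), hT.1.1 ht⟩
  rw [indepNumOn_eq_of_max G A T hun hT]
  apply le_antisymm
  · apply csSup_le'
    rintro k ⟨S, hS, rfl⟩
    have hSA : IsIndepIn G A S := ⟨hS.1.trans (Finset.erase_subset _ _), hS.2⟩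
    obtain ⟨T', hT', hsub'⟩ := exists_max_ext G A S hSA
    calc S.card ≤ T'.card := Finset.card_le_card hsub'
    _ = T.card := hun T' T hT' hT
  · exact le_csSup (bddAbove_indep G _) ⟨T, ⟨hTsub, hT.1.2⟩, rfl⟩
end

section
/- Let G be a finite simple graph on vertex set {x_{11}, …, x_{n1}} whose isolated vertices are exactly x_{11}, …, x_{t1} (with 0 ≤ t ≤ n), let m_1, …, m_n ≥ 2 be integers, and let G_1, …, G_n be connected finite simple graphs with V(G_i) = {x_{i1}, …, x_{im_i}}. Then the attachment graph G(G_1, …, G_n) is unmixed if and only if G_i is unmixed for every i = 1, …, n and G_i \ {x_{i1}} is unmixed for every i = t+1, …, n. -/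
variable {V : Type*} [DecidableEq V]

lemma extend_max (G : SimpleGraph V) (A S : Finset V) (h : IsIndepIn G A S) :
    ∃ T, S ⊆ T ∧ IsMaxIndepIn G A T := by
  classical
  set C : Finset (Finset V) := A.powerset.filter (fun T => IsIndepIn G A T ∧ S ⊆ T) with hC
  have hSC : S ∈ C := by
    simp only [hC, Finset.mem_filter, Finset.mem_powerset]
    exact ⟨h.1, h, subset_rfl⟩
  obtain ⟨T, hTC, hTmax⟩ := C.exists_max_image Finset.card ⟨S, hSC⟩
  simp only [hC, Finset.mem_filter, Finset.mem_powerset] at hTC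
  refine ⟨T, hTC.2.2, hTC.2.1, ?_⟩
  intro U hU hTU
  refine Finset.eq_of_subset_of_card_le hTU (hTmax U ?_)
  simp only [hC, Finset.mem_filter, Finset.mem_powerset]
  exact ⟨hU.1, hU, hTC.2.2.trans hTU⟩

lemma max_dominates {G : SimpleGraph V} {A S : Finset V} (h : IsMaxIndepIn G A S)
    {y : V} (hyA : y ∈ A) (hyS : y ∉ S) : ∃ v ∈ S, G.Adj y v := by
  by_contra hno
  push_neg at hno
  have hind : IsIndepIn G A (insert y S) := by
    refine ⟨Finset.insert_subset hyA h.1.1, ?_⟩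
    intro u hu v hv hadj
    rcases Finset.mem_insert.mp hu with hu' | hu'
    · rcases Finset.mem_insert.mp hv with hv' | hv'
      · rw [hu', hv'] at hadj; exact G.irrefl hadj
      · rw [hu'] at hadj; exact hno v hv' hadj
    · rcases Finset.mem_insert.mp hv with hv' | hv'
      · rw [hv'] at hadj; exact hno u hu' hadj.symm
      · exact h.1.2 u hu' v hv' hadj
  have := h.2 _ hind (Finset.subset_insert y S)
  exact hyS (this ▸ Finset.mem_insert_self y S)

section Glue
variable {n : ℕ} {x : Fin n → V} {B : Fin n → Finset V}
  {G : SimpleGraph V} {Gs : Fin n → SimpleGraph V}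

set_option linter.unusedSectionVars false in
lemma mem_B_unique (hBdisj : ∀ i j, i ≠ j → Disjoint (B i) (B j))
    {u : V} {i j : Fin n} (hi : u ∈ B i) (hj : u ∈ B j) : i = j := by
  by_contra hne
  exact Finset.disjoint_left.mp (hBdisj i j hne) hi hj

lemma glue (hxB : ∀ i, x i ∈ B i)
    (hBdisj : ∀ i j, i ≠ j → Disjoint (B i) (B j))
    (hGsupp : ∀ u v, G.Adj u v → (∃ i, u = x i) ∧ (∃ j, v = x j))
    (hGssupp : ∀ i, ∀ u v, (Gs i).Adj u v → u ∈ B i ∧ v ∈ B i)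
    (c : Fin n → Finset V)
    (hc : ∀ j, c j ⊆ B j)
    (hind : ∀ j, ∀ u ∈ c j, ∀ v ∈ c j, ¬(Gs j).Adj u v)
    (hxind : ∀ j k, x j ∈ c j → x k ∈ c k → ¬G.Adj (x j) (x k))
    (hdom : ∀ j, ∀ y ∈ B j, y ∉ c j → y ≠ x j → ∃ v ∈ c j, (Gs j).Adj y v)
    (hxdom : ∀ j, x j ∉ c j →
      (∃ v ∈ c j, (Gs j).Adj (x j) v) ∨ ∃ k, G.Adj (x j) (x k) ∧ x k ∈ c k) :
    IsMaxIndepIn (G ⊔ ⨆ i, Gs i) (Finset.univ.biUnion B) (Finset.univ.biUnion c) := by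
  have hmemc : ∀ {u : V} {j : Fin n}, u ∈ c j → u ∈ Finset.univ.biUnion c := by
    intro u j hu
    exact Finset.mem_biUnion.mpr ⟨j, Finset.mem_univ j, hu⟩
  have hsub : Finset.univ.biUnion c ⊆ Finset.univ.biUnion B := by
    intro u hu
    obtain ⟨j, -, hj⟩ := Finset.mem_biUnion.mp hu
    exact Finset.mem_biUnion.mpr ⟨j, Finset.mem_univ j, hc j hj⟩
  have hadj_iff : ∀ u v, (G ⊔ ⨆ i, Gs i).Adj u v ↔ G.Adj u v ∨ ∃ i, (Gs i).Adj u v := by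
    intro u v; simp [SimpleGraph.iSup_adj]
  have hI : IsIndepIn (G ⊔ ⨆ i, Gs i) (Finset.univ.biUnion B) (Finset.univ.biUnion c) := by
    refine ⟨hsub, ?_⟩
    intro u hu v hv hadj
    obtain ⟨j, -, hj⟩ := Finset.mem_biUnion.mp hu
    obtain ⟨k, -, hk⟩ := Finset.mem_biUnion.mp hv
    rcases (hadj_iff u v).mp hadj with hG | ⟨m, hm⟩
    · obtain ⟨⟨j', rfl⟩, ⟨k', rfl⟩⟩ := hGsupp u v hG
      have : j' = j := mem_B_unique hBdisj (hxB j') (hc j hj)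
      have : x j' ∈ c j' := this ▸ hj
      have hk'' : k' = k := mem_B_unique hBdisj (hxB k') (hc k hk)
      exact hxind j' k' this (hk'' ▸ hk) hG
    · have hj' : j = m := mem_B_unique hBdisj (hc j hj) (hGssupp m u v hm).1
      have hk' : k = m := mem_B_unique hBdisj (hc k hk) (hGssupp m u v hm).2
      exact hind m u (hj' ▸ hj) v (hk' ▸ hk) hm
  refine ⟨hI, ?_⟩
  intro T hT hsubT
  refine Finset.Subset.antisymm hsubT (fun y hy => ?_)
  by_contra hyT
  obtain ⟨j, -, hyB⟩ := Finset.mem_biUnion.mp (hT.1 hy)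
  have hyc : y ∉ c j := fun h => hyT (hmemc h)
  by_cases hyx : y = x j
  · subst hyx
    rcases hxdom j hyc with ⟨v, hv, hadj⟩ | ⟨k, hadj, hk⟩
    · exact hT.2 (x j) hy v (hsubT (hmemc hv)) ((hadj_iff (x j) v).mpr (Or.inr ⟨j, hadj⟩))
    · exact hT.2 (x j) hy (x k) (hsubT (hmemc hk)) ((hadj_iff (x j) (x k)).mpr (Or.inl hadj))
  · obtain ⟨v, hv, hadj⟩ := hdom j y hyB hyc hyx
    exact hT.2 y hy v (hsubT (hmemc hv)) ((hadj_iff y v).mpr (Or.inr ⟨j, hadj⟩))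

end Glue

section Decomp
variable {n : ℕ} {x : Fin n → V} {B : Fin n → Finset V}
  {G : SimpleGraph V} {Gs : Fin n → SimpleGraph V}

lemma comp_facts (hxB : ∀ i, x i ∈ B i)
    (hBdisj : ∀ i j, i ≠ j → Disjoint (B i) (B j))
    (hGsupp : ∀ u v, G.Adj u v → (∃ i, u = x i) ∧ (∃ j, v = x j))
    (hGssupp : ∀ i, ∀ u v, (Gs i).Adj u v → u ∈ B i ∧ v ∈ B i)
    {S : Finset V} (hS : IsMaxIndepIn (G ⊔ ⨆ i, Gs i) (Finset.univ.biUnion B) S)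
    (i : Fin n) :
    (∀ u ∈ S ∩ B i, ∀ v ∈ S ∩ B i, ¬(Gs i).Adj u v) ∧
    (∀ y ∈ B i, y ∉ S → y ≠ x i → ∃ v ∈ S ∩ B i, (Gs i).Adj y v) ∧
    (x i ∉ S → (∃ v ∈ S ∩ B i, (Gs i).Adj (x i) v) ∨ ∃ k, G.Adj (x i) (x k) ∧ x k ∈ S) := by
  have hadj_iff : ∀ u v, (G ⊔ ⨆ i, Gs i).Adj u v ↔ G.Adj u v ∨ ∃ i, (Gs i).Adj u v := by
    intro u v; simp [SimpleGraph.iSup_adj]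
  have hmemA : ∀ {u : V} {j : Fin n}, u ∈ B j → u ∈ Finset.univ.biUnion B := by
    intro u j hu; exact Finset.mem_biUnion.mpr ⟨j, Finset.mem_univ j, hu⟩
  refine ⟨?_, ?_, ?_⟩
  · intro u hu v hv hadj
    exact hS.1.2 u (Finset.mem_inter.mp hu).1 v (Finset.mem_inter.mp hv).1
      ((hadj_iff u v).mpr (Or.inr ⟨i, hadj⟩))
  · intro y hyB hyS hyx
    obtain ⟨v, hvS, hadj⟩ := max_dominates hS (hmemA hyB) hyS
    rcases (hadj_iff y v).mp hadj with hG | ⟨m, hm⟩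
    · obtain ⟨⟨k, rfl⟩, -⟩ := hGsupp y v hG
      exact (hyx (congrArg x (mem_B_unique hBdisj (hxB k) hyB))).elim
    · have hmi : m = i := mem_B_unique hBdisj (hGssupp m y v hm).1 hyB
      exact ⟨v, Finset.mem_inter.mpr ⟨hvS, hmi ▸ (hGssupp m y v hm).2⟩, hmi ▸ hm⟩
  · intro hxS
    obtain ⟨v, hvS, hadj⟩ := max_dominates hS (hmemA (hxB i)) hxS
    rcases (hadj_iff (x i) v).mp hadj with hG | ⟨m, hm⟩
    · obtain ⟨-, ⟨k, rfl⟩⟩ := hGsupp (x i) v hG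
      exact Or.inr ⟨k, hG, hvS⟩
    · have hmi : m = i := mem_B_unique hBdisj (hGssupp m (x i) v hm).1 (hxB i)
      exact Or.inl ⟨v, Finset.mem_inter.mpr ⟨hvS, hmi ▸ (hGssupp m (x i) v hm).2⟩, hmi ▸ hm⟩

set_option linter.unusedSectionVars false in
lemma exists_nbr (hxB : ∀ i, x i ∈ B i) (hBcard : ∀ i, 2 ≤ (B i).card)
    (hconn : ∀ i, ((Gs i).induce ((B i : Set V))).Connected) (j : Fin n) :
    ∃ v ∈ B j, (Gs j).Adj (x j) v := by
  obtain ⟨a, ha, b, hb, hab⟩ := Finset.one_lt_card.mp (hBcard j)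
  have hy : ∃ y ∈ B j, y ≠ x j := by
    by_cases hax : a = x j
    · subst hax; exact ⟨b, hb, Ne.symm hab⟩
    · exact ⟨a, ha, hax⟩
  obtain ⟨y, hyB, hyx⟩ := hy
  have hreach := ((hconn j).preconnected ⟨x j, by exact_mod_cast hxB j⟩ ⟨y, by exact_mod_cast hyB⟩)
  obtain ⟨w⟩ := hreach
  cases w with
  | nil => exact absurd rfl hyx
  | @cons _ c _ h p =>
    exact ⟨c.1, by exact_mod_cast c.2, SimpleGraph.comap_adj.mp h⟩

end Decomp

section Main
variable {n : ℕ} {x : Fin n → V} {B : Fin n → Finset V}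
  {G : SimpleGraph V} {Gs : Fin n → SimpleGraph V}

set_option linter.unusedSectionVars false in
lemma indep_mono {G : SimpleGraph V} {A S T : Finset V} (h : IsIndepIn G A T) (hST : S ⊆ T) :
    IsIndepIn G A S :=
  ⟨hST.trans h.1, fun u hu v hv => h.2 u (hST hu) v (hST hv)⟩

set_option linter.unusedSectionVars false in
lemma card_split (hBdisj : ∀ i j, i ≠ j → Disjoint (B i) (B j))
    {S : Finset V} (hS : S ⊆ Finset.univ.biUnion B) :
    S.card = ∑ i, (S ∩ B i).card := by
  have hrepr : S = Finset.univ.biUnion (fun i => S ∩ B i) := by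
    ext u
    simp only [Finset.mem_biUnion, Finset.mem_inter, Finset.mem_univ, true_and]
    constructor
    · intro hu
      obtain ⟨i, -, hi⟩ := Finset.mem_biUnion.mp (hS hu)
      exact ⟨i, hu, hi⟩
    · rintro ⟨i, hu, -⟩; exact hu
  conv_lhs => rw [hrepr]
  exact Finset.card_biUnion (fun a _ b _ hab =>
    (hBdisj a b hab).mono Finset.inter_subset_right Finset.inter_subset_right)

set_option linter.unusedSectionVars false in
lemma card_component_eq (hBdisj : ∀ i j, i ≠ j → Disjoint (B i) (B j))
    (hU : UnmixedOn (G ⊔ ⨆ i, Gs i) (Finset.univ.biUnion B))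
    (i : Fin n) (c c' : Fin n → Finset V)
    (hc : ∀ j, c j ⊆ B j) (hc' : ∀ j, c' j ⊆ B j)
    (h1 : IsMaxIndepIn (G ⊔ ⨆ i, Gs i) (Finset.univ.biUnion B) (Finset.univ.biUnion c))
    (h2 : IsMaxIndepIn (G ⊔ ⨆ i, Gs i) (Finset.univ.biUnion B) (Finset.univ.biUnion c'))
    (hagree : ∀ j, j ≠ i → c j = c' j) : (c i).card = (c' i).card := by
  have e1 : (Finset.univ.biUnion c).card = ∑ j, (c j).card :=
    Finset.card_biUnion (fun a _ b _ hab => (hBdisj a b hab).mono (hc a) (hc b))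
  have e2 : (Finset.univ.biUnion c').card = ∑ j, (c' j).card :=
    Finset.card_biUnion (fun a _ b _ hab => (hBdisj a b hab).mono (hc' a) (hc' b))
  have hcards := hU _ _ h1 h2
  rw [e1, e2, ← Finset.add_sum_erase _ _ (Finset.mem_univ i),
    ← Finset.add_sum_erase _ _ (Finset.mem_univ i)] at hcards
  have hsum : ∑ j ∈ Finset.univ.erase i, (c j).card
      = ∑ j ∈ Finset.univ.erase i, (c' j).card :=
    Finset.sum_congr rfl (fun j hj => by rw [hagree j (Finset.ne_of_mem_erase hj)])
  omega

end Main

/-- If the isolated vertices of `G` are exactly `x i` for `i < t`, then the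
attachment graph `G(G_1, …, G_n)` is unmixed iff every `Gs i` is unmixed and
`Gs i \ {x i}` is unmixed for every `i ≥ t`. -/
theorem stmt_11 {V : Type*} [DecidableEq V] (n t : ℕ) (ht : t ≤ n) (x : Fin n → V)
    (B : Fin n → Finset V) (G : SimpleGraph V) (Gs : Fin n → SimpleGraph V)
    (hxinj : Function.Injective x)
    (hGsupp : ∀ u v, G.Adj u v → (∃ i, u = x i) ∧ (∃ j, v = x j))
    -- the isolated vertices of `G` are exactly `x i` for `i < t`
    (hiso : ∀ i : Fin n, (∀ u, ¬G.Adj (x i) u) ↔ (i : ℕ) < t)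
    (hxB : ∀ i, x i ∈ B i)
    (hBcard : ∀ i, 2 ≤ (B i).card)
    (hBdisj : ∀ i j, i ≠ j → Disjoint (B i) (B j))
    (hGssupp : ∀ i, ∀ u v, (Gs i).Adj u v → u ∈ B i ∧ v ∈ B i)
    (hconn : ∀ i, ((Gs i).induce ((B i : Set V))).Connected) :
    UnmixedOn (G ⊔ ⨆ i, Gs i) (Finset.univ.biUnion B) ↔
      (∀ i, UnmixedOn (Gs i) (B i)) ∧
        ∀ i : Fin n, t ≤ (i : ℕ) → UnmixedOn (Gs i) ((B i).erase (x i)) := by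
  classical
  -- a neighbour of each attachment vertex inside its own blob
  choose vN hvNB hvNadj using exists_nbr hxB hBcard hconn
  -- for each j, a maximal independent set of `Gs j` on `B j` avoiding `x j`
  have hMex : ∀ j, ∃ M, IsMaxIndepIn (Gs j) (B j) M ∧ x j ∉ M := by
    intro j
    obtain ⟨M, hsub, hM⟩ := extend_max (Gs j) (B j) {vN j}
      ⟨Finset.singleton_subset_iff.mpr (hvNB j), by
        intro u hu v hv hadj
        rw [Finset.mem_singleton] at hu hv
        rw [hu, hv] at hadj
        exact (Gs j).irrefl hadj⟩
    refine ⟨M, hM, fun hxM => ?_⟩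
    exact hM.1.2 (x j) hxM (vN j) (hsub (Finset.mem_singleton_self _)) (hvNadj j)
  choose M hMmax hMx using hMex
  constructor
  · -- forward direction
    intro hU
    constructor
    · -- each `Gs i` is unmixed on `B i`
      intro i S T hSmax hTmax
      have key : ∀ S, IsMaxIndepIn (Gs i) (B i) S →
          IsMaxIndepIn (G ⊔ ⨆ i, Gs i) (Finset.univ.biUnion B)
            (Finset.univ.biUnion (fun j => if j = i then S else M j)) := by
        intro S hSm
        apply glue hxB hBdisj hGsupp hGssupp
        · intro j
          by_cases h : j = i
          · subst h; simpa using hSm.1.1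
          · simpa [h] using (hMmax j).1.1
        · intro j
          by_cases h : j = i
          · subst h; simpa using hSm.1.2
          · simpa [h] using (hMmax j).1.2
        · intro j k hj hk
          by_cases h : j = i
          · subst h
            by_cases h' : k = j
            · subst h'; exact G.loopless.irrefl _
            · rw [if_neg h'] at hk; exact absurd hk (hMx k)
          · rw [if_neg h] at hj; exact absurd hj (hMx j)
        · intro j y hyB hyc hyx
          by_cases h : j = i
          · subst h
            rw [if_pos rfl] at hyc ⊢
            exact max_dominates hSm hyB hyc
          · rw [if_neg h] at hyc ⊢
            exact max_dominates (hMmax j) hyB hyc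
        · intro j hj
          by_cases h : j = i
          · subst h
            rw [if_pos rfl] at hj ⊢
            exact Or.inl (max_dominates hSm (hxB j) hj)
          · rw [if_neg h] at hj ⊢
            exact Or.inl (max_dominates (hMmax j) (hxB j) hj)
      have := card_component_eq hBdisj hU i
        (fun j => if j = i then S else M j) (fun j => if j = i then T else M j)
        (fun j => by by_cases h : j = i
                     · subst h; simpa using hSmax.1.1
                     · simpa [h] using (hMmax j).1.1)
        (fun j => by by_cases h : j = i
                     · subst h; simpa using hTmax.1.1
                     · simpa [h] using (hMmax j).1.1)
        (key S hSmax) (key T hTmax)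
        (fun j hj => by simp only [if_neg hj])
      simpa using this
    · -- each `Gs i` is unmixed on `B i \ {x i}` for `i ≥ t`
      intro i hti S T hSmax hTmax
      -- `x i` is not isolated in `G`
      have hnot : ¬ (∀ u, ¬G.Adj (x i) u) := by
        rw [hiso i]; omega
      push_neg at hnot
      obtain ⟨u, hadj⟩ := hnot
      obtain ⟨-, k, rfl⟩ := hGsupp _ _ hadj
      have hki : k ≠ i := by
        intro h; subst h
        exact G.loopless.irrefl _ hadj
      -- a maximal independent set of `Gs k` on `B k` containing `x k`
      obtain ⟨Mk, hMksub, hMkmax⟩ := extend_max (Gs k) (B k) {x k}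
        ⟨Finset.singleton_subset_iff.mpr (hxB k), by
          intro a ha b hb hab
          rw [Finset.mem_singleton] at ha hb
          rw [ha, hb] at hab
          exact (Gs k).irrefl hab⟩
      have hxkMk : x k ∈ Mk := hMksub (Finset.mem_singleton_self _)
      have hBsub : ((B i).erase (x i)) ⊆ B i := Finset.erase_subset _ _
      have key : ∀ S, IsMaxIndepIn (Gs i) ((B i).erase (x i)) S →
          IsMaxIndepIn (G ⊔ ⨆ i, Gs i) (Finset.univ.biUnion B)
            (Finset.univ.biUnion (fun j => if j = i then S else if j = k then Mk else M j)) := by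
        intro S hSm
        have hxiS : x i ∉ S := fun h => (Finset.mem_erase.mp (hSm.1.1 h)).1 rfl
        apply glue hxB hBdisj hGsupp hGssupp
        · intro j
          by_cases h : j = i
          · subst h; simpa using hSm.1.1.trans hBsub
          · by_cases h' : j = k
            · subst h'; simpa [h] using hMkmax.1.1
            · simpa [h, h'] using (hMmax j).1.1
        · intro j
          by_cases h : j = i
          · subst h; simpa using hSm.1.2
          · by_cases h' : j = k
            · subst h'; simpa [h] using hMkmax.1.2
            · simpa [h, h'] using (hMmax j).1.2
        · intro j j' hj hj'
          have hjk : ∀ m, x m ∈ (if m = i then S else if m = k then Mk else M m) → m = k := by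
            intro m hm
            by_cases h : m = i
            · subst h; rw [if_pos rfl] at hm; exact absurd hm hxiS
            · by_cases h' : m = k
              · exact h'
              · rw [if_neg h, if_neg h'] at hm; exact absurd hm (hMx m)
          have h1 := hjk j hj
          have h2 := hjk j' hj'
          subst h1; subst h2
          exact G.loopless.irrefl _
        · intro j y hyB hyc hyx
          by_cases h : j = i
          · subst h
            rw [if_pos rfl] at hyc ⊢
            have hy' : y ∈ (B j).erase (x j) := Finset.mem_erase.mpr ⟨hyx, hyB⟩
            exact max_dominates hSm hy' hyc
          · by_cases h' : j = k
            · subst h'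
              rw [if_neg h, if_pos rfl] at hyc ⊢
              exact max_dominates hMkmax hyB hyc
            · rw [if_neg h, if_neg h'] at hyc ⊢
              exact max_dominates (hMmax j) hyB hyc
        · intro j hj
          by_cases h : j = i
          · subst h
            refine Or.inr ⟨k, hadj, ?_⟩
            rw [if_neg hki, if_pos rfl]
            exact hxkMk
          · by_cases h' : j = k
            · subst h'; rw [if_neg h, if_pos rfl] at hj; exact absurd hxkMk hj
            · rw [if_neg h, if_neg h'] at hj ⊢
              exact Or.inl (max_dominates (hMmax j) (hxB j) hj)
      have := card_component_eq hBdisj hU i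
        (fun j => if j = i then S else if j = k then Mk else M j)
        (fun j => if j = i then T else if j = k then Mk else M j)
        (fun j => by by_cases h : j = i
                     · subst h; simpa using hSmax.1.1.trans hBsub
                     · by_cases h' : j = k
                       · subst h'; simpa [h] using hMkmax.1.1
                       · simpa [h, h'] using (hMmax j).1.1)
        (fun j => by by_cases h : j = i
                     · subst h; simpa using hTmax.1.1.trans hBsub
                     · by_cases h' : j = k
                       · subst h'; simpa [h] using hMkmax.1.1
                       · simpa [h, h'] using (hMmax j).1.1)
        (key S hSmax) (key T hTmax)
        (fun j hj => by simp only [if_neg hj])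
      simpa using this
  · -- backward direction
    rintro ⟨hU1, hU2⟩ S T hSmax hTmax
    -- a reference maximal independent set in each blob
    have hPex : ∀ i, ∃ P, IsMaxIndepIn (Gs i) (B i) P := by
      intro i
      obtain ⟨P, -, hP⟩ := extend_max (Gs i) (B i) ∅
        ⟨Finset.empty_subset _, by simp⟩
      exact ⟨P, hP⟩
    choose P hPmax using hPex
    have key : ∀ S, IsMaxIndepIn (G ⊔ ⨆ i, Gs i) (Finset.univ.biUnion B) S →
        ∀ i, (S ∩ B i).card = (P i).card := by
      intro S hS i
      obtain ⟨hind_i, hdom_i, hxdom_i⟩ := comp_facts hxB hBdisj hGsupp hGssupp hS i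
      have hSBmem : ∀ {y : V}, y ∈ B i → y ∈ S → y ∈ S ∩ B i := by
        intro y hyB hyS; exact Finset.mem_inter.mpr ⟨hyS, hyB⟩
      by_cases hcase : x i ∈ S ∨ ∃ v ∈ S ∩ B i, (Gs i).Adj (x i) v
      · -- `S ∩ B i` is maximal in `Gs i` on `B i`
        have hmax : IsMaxIndepIn (Gs i) (B i) (S ∩ B i) := by
          refine ⟨⟨Finset.inter_subset_right, hind_i⟩, ?_⟩
          intro T hT hsub
          refine Finset.Subset.antisymm hsub (fun y hy => ?_)
          by_contra hyn
          have hyB : y ∈ B i := hT.1 hy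
          have hyS : y ∉ S := fun h => hyn (hSBmem hyB h)
          by_cases hyx : y = x i
          · subst hyx
            rcases hcase with h | ⟨v, hv, hvadj⟩
            · exact hyS h
            · exact hT.2 (x i) hy v (hsub hv) hvadj
          · obtain ⟨v, hv, hvadj⟩ := hdom_i y hyB hyS hyx
            exact hT.2 y hy v (hsub hv) hvadj
        exact hU1 i _ _ hmax (hPmax i)
      · -- impossible case
        push_neg at hcase
        obtain ⟨hxiS, hnoint⟩ := hcase
        have hxiSB : x i ∉ S ∩ B i := fun h => hxiS (Finset.mem_inter.mp h).1
        rcases hxdom_i hxiS with ⟨v, hv, hvadj⟩ | ⟨k, hadj, -⟩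
        · exact absurd hvadj (hnoint v hv)
        have hti : t ≤ (i : ℕ) := by
          have : ¬ (∀ u, ¬G.Adj (x i) u) := fun h => h _ hadj
          rw [hiso i] at this; omega
        have hU2i := hU2 i hti
        -- `S ∩ B i` is maximal on the erased blob
        have hmax1 : IsMaxIndepIn (Gs i) ((B i).erase (x i)) (S ∩ B i) := by
          refine ⟨⟨fun y hy => Finset.mem_erase.mpr
            ⟨fun h => hxiSB (h ▸ hy), (Finset.mem_inter.mp hy).2⟩, hind_i⟩, ?_⟩
          intro T hT hsub
          refine Finset.Subset.antisymm hsub (fun y hy => ?_)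
          by_contra hyn
          have hy' := Finset.mem_erase.mp (hT.1 hy)
          have hyS : y ∉ S := fun h => hyn (hSBmem hy'.2 h)
          obtain ⟨v, hv, hvadj⟩ := hdom_i y hy'.2 hyS hy'.1
          exact hT.2 y hy v (hsub hv) hvadj
        -- `insert (x i) (S ∩ B i)` is maximal on `B i`
        have hmax2 : IsMaxIndepIn (Gs i) (B i) (insert (x i) (S ∩ B i)) := by
          refine ⟨⟨Finset.insert_subset (hxB i) Finset.inter_subset_right, ?_⟩, ?_⟩
          · intro u hu v hv huv
            rcases Finset.mem_insert.mp hu with hu' | hu'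
            · rcases Finset.mem_insert.mp hv with hv' | hv'
              · rw [hu', hv'] at huv; exact (Gs i).irrefl huv
              · rw [hu'] at huv; exact hnoint v hv' huv
            · rcases Finset.mem_insert.mp hv with hv' | hv'
              · rw [hv'] at huv; exact hnoint u hu' huv.symm
              · exact hind_i u hu' v hv' huv
          · intro T hT hsub
            refine Finset.Subset.antisymm hsub (fun y hy => ?_)
            by_contra hyn
            have hyB : y ∈ B i := hT.1 hy
            have hyx : y ≠ x i := fun h => hyn (h ▸ Finset.mem_insert_self _ _)
            have hyS : y ∉ S := fun h =>
              hyn (Finset.mem_insert_of_mem (hSBmem hyB h))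
            obtain ⟨v, hv, hvadj⟩ := hdom_i y hyB hyS hyx
            exact hT.2 y hy v (hsub (Finset.mem_insert_of_mem hv)) hvadj
        -- a maximal set on the erased blob containing a neighbour of `x i`
        have hvNi : vN i ∈ (B i).erase (x i) :=
          Finset.mem_erase.mpr ⟨(hvNadj i).ne', hvNB i⟩
        obtain ⟨Q, hQsub, hQmax⟩ := extend_max (Gs i) ((B i).erase (x i)) {vN i}
          ⟨Finset.singleton_subset_iff.mpr hvNi, by
            intro a ha b hb hab
            rw [Finset.mem_singleton] at ha hb
            rw [ha, hb] at hab
            exact (Gs i).irrefl hab⟩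
        have hvNQ : vN i ∈ Q := hQsub (Finset.mem_singleton_self _)
        -- `Q` is also maximal on the full blob
        have hQmax' : IsMaxIndepIn (Gs i) (B i) Q := by
          refine ⟨⟨hQmax.1.1.trans (Finset.erase_subset _ _), hQmax.1.2⟩, ?_⟩
          intro T hT hsub
          refine Finset.Subset.antisymm hsub (fun y hy => ?_)
          by_contra hyn
          have hyB : y ∈ B i := hT.1 hy
          by_cases hyx : y = x i
          · subst hyx
            exact hT.2 (x i) hy (vN i) (hsub hvNQ) (hvNadj i)
          · have hinssub : insert y Q ⊆ T := Finset.insert_subset hy hsub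
            have hins : IsIndepIn (Gs i) ((B i).erase (x i)) (insert y Q) :=
              ⟨Finset.insert_subset (Finset.mem_erase.mpr ⟨hyx, hyB⟩) hQmax.1.1,
                fun a ha b hb => hT.2 a (hinssub ha) b (hinssub hb)⟩
            have := hQmax.2 _ hins (Finset.subset_insert y Q)
            exact hyn (this ▸ Finset.mem_insert_self y Q)
        have e1 : (S ∩ B i).card = Q.card := hU2i _ _ hmax1 hQmax
        have e2 : (insert (x i) (S ∩ B i)).card = (P i).card := hU1 i _ _ hmax2 (hPmax i)
        have e3 : Q.card = (P i).card := hU1 i _ _ hQmax' (hPmax i)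
        rw [Finset.card_insert_of_notMem hxiSB] at e2
        omega
    calc S.card = ∑ i, (S ∩ B i).card := card_split hBdisj hSmax.1.1
      _ = ∑ i, (P i).card := Finset.sum_congr rfl (fun i _ => key S hSmax i)
      _ = ∑ i, (T ∩ B i).card := (Finset.sum_congr rfl (fun i _ => (key T hTmax i).symm))
      _ = T.card := (card_split hBdisj hTmax.1.1).symm
end

section
/- Let G be a finite simple unmixed chordal graph and let x be a simplicial vertex of G. Then for every neighbor y of x, the induced subgraph G \ {y} is unmixed. -/
variable {V : Type*} [DecidableEq V]

/-- If `G` is a finite unmixed chordal graph and `x` is a simplicial vertex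
of `G`, then `G \ {y}` is unmixed for every neighbor `y` of `x`. -/
theorem stmt_12 {V : Type*} [DecidableEq V] [Fintype V] (G : SimpleGraph V)
    (hun : UnmixedOn G Finset.univ) (hch : IsChordal G) (x y : V)
    -- `x` is a simplicial vertex: its neighborhood is a clique
    (hsimp : ∀ u v, G.Adj x u → G.Adj x v → u ≠ v → G.Adj u v)
    -- `y` is a neighbor of `x`
    (hy : G.Adj x y) :
    UnmixedOn G (Finset.univ.erase y) := by
  intro S T hS hT
  have key : ∀ S, IsMaxIndepIn G (Finset.univ.erase y) S → IsMaxIndepIn G Finset.univ S := by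
    intro S hS
    obtain ⟨⟨hSsub, hSind⟩, hSmax⟩ := hS
    have hz : ∃ z ∈ S, G.Adj y z := by
      by_contra h
      push_neg at h
      have hxS : x ∉ S := fun hxS => h x hxS hy.symm
      have hind : IsIndepIn G (Finset.univ.erase y) (insert x S) := by
        constructor
        · intro u hu
          rcases Finset.mem_insert.mp hu with rfl | hu
          · exact Finset.mem_erase.mpr ⟨hy.ne, Finset.mem_univ _⟩
          · exact hSsub hu
        · intro u hu v hv hadj
          rcases Finset.mem_insert.mp hu with rfl | hu'
          · rcases Finset.mem_insert.mp hv with rfl | hv'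
            · exact G.loopless.irrefl _ hadj
            · have hvy : v ≠ y := (Finset.mem_erase.mp (hSsub hv')).1
              exact h v hv' (hsimp v y hadj hy hvy).symm
          · rcases Finset.mem_insert.mp hv with rfl | hv'
            · have huy : u ≠ y := (Finset.mem_erase.mp (hSsub hu')).1
              exact h u hu' (hsimp u y hadj.symm hy huy).symm
            · exact hSind u hu' v hv' hadj
      have := hSmax _ hind (Finset.subset_insert x S)
      exact hxS (this ▸ Finset.mem_insert_self x S)
    obtain ⟨z, hzS, hyz⟩ := hz
    refine ⟨⟨Finset.subset_univ S, hSind⟩, ?_⟩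
    intro T' hT' hST'
    have hyT' : y ∉ T' := fun hyT' => hT'.2 y hyT' z (hST' hzS) hyz
    have : IsIndepIn G (Finset.univ.erase y) T' := by
      refine ⟨fun t ht => Finset.mem_erase.mpr ⟨?_, Finset.mem_univ _⟩, hT'.2⟩
      rintro rfl; exact hyT' ht
    exact hSmax T' this hST'
  exact hun S T (key S hS) (key T hT)
end
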